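/- Assume Hypothesis 7.1 holds for the subset I ⊆ S. Let (l^(u))_{u ∈ U^I_min} be a family with l^(u) ∈ L_u for every u ∈ U^I_min. Then Σ_{u ∈ U^I_min} l^(u) = 0 in ℤ^N if and only if l^(u) = 0 for all u ∈ U^I_min. -/

import Mathlib

/-- `a_j⁺ = (a_{0j}, …, a_{nj}, 1) ∈ ℕ^{n+2}`. -/
def aplus {n N : ℕ} (a : Fin N → Fin (n + 1) → ℕ) (j : Fin N) : Fin (n + 2) → ℕ :=
  Fin.snoc (a j) 1

/-- Proposition 7.8: under Hypothesis 7.1, if `l⁽ᵘ⁾ ∈ L_u` for every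
`u ∈ U^I_min`, then `∑_{u ∈ U^I_min} l⁽ᵘ⁾ = 0` in `ℤ^N` if and only if `l⁽ᵘ⁾ = 0` for
all `u`.  Here `U^I_min` is enumerated by `umin : Fin m → ℕ^{n+2}` and Hypothesis 7.1
is encoded by `κ` and `hκ` (indices are 0-based, so `j ≤ μ_I` becomes `(j : ℕ) < μ`). -/
theorem stmt_13 (p n N d : ℕ) (hp : p.Prime) (hn : 1 ≤ n) (hN : 1 ≤ N) (hd : 2 ≤ d)
    (a : Fin N → Fin (n + 1) → ℕ) (ha : ∀ j, ∑ i, a j i = d)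
    (I : Finset (Fin (n + 1)))
    (μ m : ℕ) (hμ : μ + 1 = (I.card + d - 1) / d)
    (umin : Fin m → Fin (n + 2) → ℕ)
    (huinj : Function.Injective umin)
    (hurange : ∀ u : Fin (n + 2) → ℕ,
      ((∑ i : Fin (n + 1), u i.castSucc = d * u (Fin.last (n + 1))) ∧
        (∀ i ∈ I, 0 < u i.castSucc) ∧ u (Fin.last (n + 1)) = μ + 1)
      ↔ ∃ r : Fin m, umin r = u)
    (hNm : μ + m ≤ N)
    (κ : Fin m → Fin m)
    (hκ : ∀ r : Fin m, ∀ i : Fin (n + 2),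
      umin r i = aplus a ⟨μ + (κ r : ℕ), by have := (κ r).isLt; omega⟩ i +
        ∑ t : Fin μ, aplus a ⟨(t : ℕ), by have := t.isLt; omega⟩ i)
    (l : Fin m → Fin N → ℤ)
    (hl : ∀ r : Fin m,
      (∀ i : Fin (n + 2), ∑ j, l r j * (aplus a j i : ℤ) = 0) ∧
      (∀ j : Fin N, (j : ℕ) < μ → l r j ≤ 0) ∧
      (∀ j : Fin N, (j : ℕ) = μ + (κ r : ℕ) → l r j ≤ 0) ∧
      (∀ j : Fin N, ¬ (j : ℕ) < μ → (j : ℕ) ≠ μ + (κ r : ℕ) → 0 ≤ l r j)) :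
    (∀ j : Fin N, ∑ r : Fin m, l r j = 0) ↔ (∀ r : Fin m, l r = 0) := by
  constructor
  · intro H
    -- κ is injective
    have hκinj : Function.Injective κ := by
      intro r r' h
      apply huinj
      funext i
      rw [hκ r i, hκ r' i]; simp only [h]
    have hjrlt : ∀ r : Fin m, μ + (κ r : ℕ) < N := by
      intro r; have := (κ r).isLt; omega
    set jr : Fin m → Fin N := fun r => ⟨μ + (κ r : ℕ), hjrlt r⟩ with hjrdef
    have hjrval : ∀ r, (jr r : ℕ) = μ + (κ r : ℕ) := fun r => rfl
    have hjrinj : Function.Injective jr := by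
      intro r r' h
      apply hκinj
      have h2 : μ + (κ r : ℕ) = μ + (κ r' : ℕ) := congrArg Fin.val h
      exact Fin.ext (by omega)
    -- every column not of the form `jr r'` vanishes identically
    have key0 : ∀ (r : Fin m) (j : Fin N), (∀ r', j ≠ jr r') → l r j = 0 := by
      intro r j hj
      by_cases hlt : (j : ℕ) < μ
      · exact (Finset.sum_eq_zero_iff_of_nonpos
          (fun r' _ => (hl r').2.1 j hlt)).1 (H j) r (Finset.mem_univ r)
      · have hne : ∀ r', (j : ℕ) ≠ μ + (κ r' : ℕ) := by
          intro r' hje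
          exact hj r' (Fin.ext hje)
        exact (Finset.sum_eq_zero_iff_of_nonneg
          (fun r' _ => (hl r').2.2.2 j hlt (hne r'))).1 (H j) r (Finset.mem_univ r)
    -- sums against any function collapse to the columns `jr r'`
    have himg : ∀ (r : Fin m) (f : Fin N → ℤ),
        (∑ j, l r j * f j) = ∑ r' : Fin m, l r (jr r') * f (jr r') := by
      intro r f
      have e : ∑ j ∈ Finset.univ.image jr, l r j * f j
          = ∑ r' : Fin m, l r (jr r') * f (jr r') :=
        Finset.sum_image (fun x _ y _ h => hjrinj h)
      rw [← e]
      refine (Finset.sum_subset (Finset.subset_univ _) ?_).symm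
      intro j _ hj
      have hj' : ∀ r', j ≠ jr r' := by
        intro r' he
        exact hj (Finset.mem_image.mpr ⟨r', Finset.mem_univ r', he.symm⟩)
      rw [key0 r j hj', zero_mul]
    -- row sums vanish (last coordinate of the relation)
    have hrow : ∀ r : Fin m, ∑ r' : Fin m, l r (jr r') = 0 := by
      intro r
      have h1 := (hl r).1 (Fin.last (n + 1))
      have h2 := (himg r (fun j => ((aplus a j (Fin.last (n + 1)) : ℕ) : ℤ))).symm.trans h1
      simpa [aplus] using h2
    -- column sums vanish (the hypothesis)
    have hcol : ∀ r' : Fin m, ∑ r : Fin m, l r (jr r') = 0 := fun r' => H (jr r')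
    -- the relation, rewritten through `umin` using Hypothesis 7.1
    have hrel : ∀ (r : Fin m) (i : Fin (n + 2)),
        ∑ r' : Fin m, l r (jr r') * (umin r' i : ℤ) = 0 := by
      intro r i
      have h1 := (hl r).1 i
      have h2 := (himg r (fun j => ((aplus a j i : ℕ) : ℤ))).symm.trans h1
      have h3 : ∀ r' : Fin m, (umin r' i : ℤ) = (aplus a (jr r') i : ℤ) +
          ∑ t : Fin μ, ((aplus a ⟨(t : ℕ), by have := t.isLt; omega⟩ i : ℕ) : ℤ) := by
        intro r'
        have h := hκ r' i
        push_cast [h]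
        rfl
      calc ∑ r' : Fin m, l r (jr r') * (umin r' i : ℤ)
          = ∑ r' : Fin m, (l r (jr r') * (aplus a (jr r') i : ℤ)
              + l r (jr r') * ∑ t : Fin μ,
                ((aplus a ⟨(t : ℕ), by have := t.isLt; omega⟩ i : ℕ) : ℤ)) := by
            refine Finset.sum_congr rfl fun r' _ => ?_
            rw [h3 r']; ring
        _ = (∑ r' : Fin m, l r (jr r') * (aplus a (jr r') i : ℤ))
              + (∑ r' : Fin m, l r (jr r')) * ∑ t : Fin μ,
                ((aplus a ⟨(t : ℕ), by have := t.isLt; omega⟩ i : ℕ) : ℤ) := by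
            rw [Finset.sum_add_distrib, ← Finset.sum_mul]
        _ = 0 := by rw [h2, hrow r]; ring
    -- the quadratic identity: total "energy" vanishes
    have hQ : ∑ r : Fin m, ∑ r' : Fin m,
        l r (jr r') * (∑ i : Fin (n + 2), ((umin r' i : ℤ) - (umin r i : ℤ)) ^ 2) = 0 := by
      have inner : ∀ r : Fin m,
          ∑ r' : Fin m, l r (jr r') * (∑ i : Fin (n + 2),
            ((umin r' i : ℤ) - (umin r i : ℤ)) ^ 2)
          = ∑ r' : Fin m, l r (jr r') * (∑ i : Fin (n + 2), (umin r' i : ℤ) ^ 2) := by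
        intro r
        have e2 : ∀ i : Fin (n + 2),
            ∑ r' : Fin m, l r (jr r') * ((umin r' i : ℤ) - (umin r i : ℤ)) ^ 2
            = ∑ r' : Fin m, l r (jr r') * (umin r' i : ℤ) ^ 2 := by
          intro i
          calc ∑ r' : Fin m, l r (jr r') * ((umin r' i : ℤ) - (umin r i : ℤ)) ^ 2
              = ∑ r' : Fin m, (l r (jr r') * (umin r' i : ℤ) ^ 2
                  - 2 * (umin r i : ℤ) * (l r (jr r') * (umin r' i : ℤ))
                  + (umin r i : ℤ) ^ 2 * l r (jr r')) :=
                Finset.sum_congr rfl fun r' _ => by ring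
            _ = (∑ r' : Fin m, l r (jr r') * (umin r' i : ℤ) ^ 2)
                  - 2 * (umin r i : ℤ) * (∑ r' : Fin m, l r (jr r') * (umin r' i : ℤ))
                  + (umin r i : ℤ) ^ 2 * (∑ r' : Fin m, l r (jr r')) := by
                rw [Finset.sum_add_distrib, Finset.sum_sub_distrib, Finset.mul_sum,
                  Finset.mul_sum]
            _ = ∑ r' : Fin m, l r (jr r') * (umin r' i : ℤ) ^ 2 := by
                rw [hrel r i, hrow r]; ring
        calc ∑ r' : Fin m, l r (jr r') * (∑ i : Fin (n + 2),
              ((umin r' i : ℤ) - (umin r i : ℤ)) ^ 2)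
            = ∑ r' : Fin m, ∑ i : Fin (n + 2),
                l r (jr r') * ((umin r' i : ℤ) - (umin r i : ℤ)) ^ 2 :=
              Finset.sum_congr rfl fun r' _ => by rw [Finset.mul_sum]
          _ = ∑ i : Fin (n + 2), ∑ r' : Fin m,
                l r (jr r') * ((umin r' i : ℤ) - (umin r i : ℤ)) ^ 2 :=
              Finset.sum_comm
          _ = ∑ i : Fin (n + 2), ∑ r' : Fin m, l r (jr r') * (umin r' i : ℤ) ^ 2 :=
              Finset.sum_congr rfl fun i _ => e2 i
          _ = ∑ r' : Fin m, ∑ i : Fin (n + 2), l r (jr r') * (umin r' i : ℤ) ^ 2 :=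
              Finset.sum_comm
          _ = ∑ r' : Fin m, l r (jr r') * (∑ i : Fin (n + 2), (umin r' i : ℤ) ^ 2) :=
              Finset.sum_congr rfl fun r' _ => by rw [Finset.mul_sum]
      calc ∑ r : Fin m, ∑ r' : Fin m,
            l r (jr r') * (∑ i : Fin (n + 2), ((umin r' i : ℤ) - (umin r i : ℤ)) ^ 2)
          = ∑ r : Fin m, ∑ r' : Fin m,
              l r (jr r') * (∑ i : Fin (n + 2), (umin r' i : ℤ) ^ 2) :=
            Finset.sum_congr rfl fun r _ => inner r
        _ = ∑ r' : Fin m, (∑ r : Fin m, l r (jr r')) *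
              (∑ i : Fin (n + 2), (umin r' i : ℤ) ^ 2) := by
            rw [Finset.sum_comm]
            exact Finset.sum_congr rfl fun r' _ => (Finset.sum_mul ..).symm
        _ = 0 := by
            refine Finset.sum_eq_zero fun r' _ => ?_
            rw [hcol r', zero_mul]
    -- each summand of the quadratic identity is nonnegative
    have hnn : ∀ r r' : Fin m,
        0 ≤ l r (jr r') * (∑ i : Fin (n + 2), ((umin r' i : ℤ) - (umin r i : ℤ)) ^ 2) := by
      intro r r'
      by_cases h : r = r'
      · subst h; simp
      · refine mul_nonneg ?_ (Finset.sum_nonneg fun i _ => sq_nonneg _)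
        refine (hl r).2.2.2 (jr r') (by rw [hjrval]; omega) ?_
        rw [hjrval]
        intro he
        exact h (hκinj (Fin.val_injective (by omega))).symm
    have hterm : ∀ r r' : Fin m,
        l r (jr r') * (∑ i : Fin (n + 2), ((umin r' i : ℤ) - (umin r i : ℤ)) ^ 2) = 0 := by
      intro r r'
      have houter := (Finset.sum_eq_zero_iff_of_nonneg
        (fun r _ => Finset.sum_nonneg fun r' _ => hnn r r')).1 hQ r (Finset.mem_univ r)
      exact (Finset.sum_eq_zero_iff_of_nonneg (fun r' _ => hnn r r')).1 houter r'
        (Finset.mem_univ r')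
    -- off-diagonal entries vanish
    have hM0 : ∀ r r' : Fin m, r ≠ r' → l r (jr r') = 0 := by
      intro r r' h
      have hpos : 0 < ∑ i : Fin (n + 2), ((umin r' i : ℤ) - (umin r i : ℤ)) ^ 2 := by
        have hne : umin r ≠ umin r' := fun he => h (huinj he)
        obtain ⟨i0, hi0⟩ : ∃ i, umin r i ≠ umin r' i := by
          by_contra hc
          push_neg at hc
          exact hne (funext hc)
        refine Finset.sum_pos' (fun i _ => sq_nonneg _) ⟨i0, Finset.mem_univ i0, ?_⟩
        have : (umin r' i0 : ℤ) - (umin r i0 : ℤ) ≠ 0 := by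
          intro hz
          have h5 : (umin r' i0 : ℤ) = (umin r i0 : ℤ) := sub_eq_zero.mp hz
          exact hi0 (Nat.cast_injective h5).symm
        exact lt_of_le_of_ne (sq_nonneg _) (Ne.symm (pow_ne_zero 2 this))
      rcases mul_eq_zero.mp (hterm r r') with h1 | h2
      · exact h1
      · exact absurd h2 (ne_of_gt hpos)
    -- diagonal entries vanish via row sums
    have hdiag : ∀ r : Fin m, l r (jr r) = 0 := by
      intro r
      have := hrow r
      rwa [Finset.sum_eq_single r (fun r' _ hr' => hM0 r r' (Ne.symm hr'))
        (fun hr => absurd (Finset.mem_univ r) hr)] at this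
    intro r
    funext j
    simp only [Pi.zero_apply]
    by_cases hj : ∃ r', j = jr r'
    · obtain ⟨r', rfl⟩ := hj
      by_cases h : r = r'
      · subst h; exact hdiag r
      · exact hM0 r r' h
    · push_neg at hj
      exact key0 r j hj
  · intro h j
    refine Finset.sum_eq_zero fun r _ => ?_
    rw [h r]
    rfl
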